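/- Let Yi = ci·Xi + di with ci > 0 and di ≥ 0 for i=1,2. Then the bivariate CPE satisfies CPE(Y1,Y2) = c1·c2·CPE(X1,X2); i.e., bivariate CPE is invariant under shifts and scales multiplicatively. -/

import Mathlib

open MeasureTheory Real Set intervalIntegral

/-- If `Yi = ci·Xi + di` with `ci > 0`, `di ≥ 0`, then the joint
distribution function of `Y` is `G(y1,y2) = F((y1-d1)/c1, (y2-d2)/c2)` and the
bivariate CPE satisfies `CPE(Y1,Y2) = c1·c2·CPE(X1,X2)`. -/
theorem bivariate_CPE_linear_transform
    (b1 b2 c1 c2 d1 d2 : ℝ) (hb1 : 0 < b1) (hb2 : 0 < b2)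
    (hc1 : 0 < c1) (hc2 : 0 < c2) (hd1 : 0 ≤ d1) (hd2 : 0 ≤ d2)
    (F : ℝ → ℝ → ℝ)
    (G : ℝ → ℝ → ℝ)
    (hG : ∀ y1 y2, G y1 y2 = F ((y1 - d1) / c1) ((y2 - d2) / c2))
    (hint : ∀ x1, IntervalIntegrable
      (fun x2 => F x1 x2 * Real.log (F x1 x2)) volume 0 b2)
    (hint' : IntervalIntegrable
      (fun x1 => ∫ x2 in (0:ℝ)..b2, F x1 x2 * Real.log (F x1 x2)) volume 0 b1) :
    (-∫ y1 in d1..(c1 * b1 + d1), ∫ y2 in d2..(c2 * b2 + d2),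
        G y1 y2 * Real.log (G y1 y2)) =
      c1 * c2 *
        (-∫ x1 in (0:ℝ)..b1, ∫ x2 in (0:ℝ)..b2,
            F x1 x2 * Real.log (F x1 x2)) := by
  have inner : ∀ y1 : ℝ, (∫ y2 in d2..(c2 * b2 + d2), G y1 y2 * Real.log (G y1 y2))
      = c2 * ∫ x2 in (0:ℝ)..b2,
          F ((y1 - d1) / c1) x2 * Real.log (F ((y1 - d1) / c1) x2) := by
    intro y1
    have h := intervalIntegral.smul_integral_comp_mul_add
      (a := (0:ℝ)) (b := b2)
      (f := fun y2 => G y1 y2 * Real.log (G y1 y2)) c2 d2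
    rw [mul_zero, zero_add] at h
    rw [← h]
    simp only [smul_eq_mul]
    congr 1
    apply intervalIntegral.integral_congr
    intro x2 _
    have : (c2 * x2 + d2 - d2) / c2 = x2 := by field_simp; ring
    simp only [hG, this]
  have houter := intervalIntegral.smul_integral_comp_mul_add
    (a := (0:ℝ)) (b := b1)
    (f := fun y1 => ∫ y2 in d2..(c2 * b2 + d2), G y1 y2 * Real.log (G y1 y2)) c1 d1
  rw [mul_zero, zero_add] at houter
  rw [← houter]
  simp only [smul_eq_mul]
  have : (∫ x1 in (0:ℝ)..b1,
      ∫ y2 in d2..(c2 * b2 + d2), G (c1 * x1 + d1) y2 * Real.log (G (c1 * x1 + d1) y2))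
      = c2 * ∫ x1 in (0:ℝ)..b1, ∫ x2 in (0:ℝ)..b2,
          F x1 x2 * Real.log (F x1 x2) := by
    rw [← intervalIntegral.integral_const_mul]
    apply intervalIntegral.integral_congr
    intro x1 _
    simp only [inner]
    rw [show (c1 * x1 + d1 - d1) / c1 = x1 by field_simp; ring]
  rw [this]
  ring
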